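/- Let n be a prime, ω = e^{2πi/n}, d ≥ 1, and let T_2 be the d × d cyclic permutation matrix over F_n with (T_2)_{a,b} = 1[a + 1 ≡ b mod d]. Then for κ = {1, 3, 5, …, d−1} (d even), the partial transpose of W_{T_2} with respect to κ has rank 1, where (W_{T_2})_{(i_1,…,i_d),(j_1,…,j_d)} = ω^{∑_{k=1}^d i_k j_{(k mod d) + 1}}. Consequently, PT-rank(W_{T_2}) = 1. -/

import Mathlib

open Matrix BigOperators

/-- The `κ`-partial transpose of an `n^d × n^d` matrix (indexed by tuples in `[n]^d`). -/
def ptrans {F : Type*} [Field F] {n d : ℕ} (κ : Finset (Fin d))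
    (M : Matrix (Fin d → Fin n) (Fin d → Fin n) F) :
    Matrix (Fin d → Fin n) (Fin d → Fin n) F :=
  fun i j => M (fun k => if k ∈ κ then j k else i k) (fun k => if k ∈ κ then i k else j k)

/-- A matrix is PT-basic if some partial transpose of it has rank 1. -/
def IsPTBasic {F : Type*} [Field F] {n d : ℕ}
    (M : Matrix (Fin d → Fin n) (Fin d → Fin n) F) : Prop :=
  ∃ κ : Finset (Fin d), (ptrans κ M).rank = 1

/-- The PT-rank of `M`: the minimum number of PT-basic matrices summing to `M`. -/
noncomputable def PTrank {F : Type*} [Field F] {n d : ℕ}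
    (M : Matrix (Fin d → Fin n) (Fin d → Fin n) F) : ℕ :=
  sInf { r | ∃ P : Fin r → Matrix (Fin d → Fin n) (Fin d → Fin n) F,
    (∀ i, IsPTBasic (P i)) ∧ M = ∑ i, P i }

/-- `ω = e^{2πi/n}`, a primitive `n`-th root of unity. -/
noncomputable def omg (n : ℕ) : ℂ := Complex.exp (2 * Real.pi * Complex.I / n)
/-- The matrix `W_{T_2}` for the cyclic permutation matrix `T_2`:
`(W_{T_2})_{i⃗,j⃗} = ω^{∑_k i_k j_{(k mod d)+1}}` (cyclic successor of indices). -/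
noncomputable def Wcyc (n d : ℕ) [NeZero d] : Matrix (Fin d → Fin n) (Fin d → Fin n) ℂ :=
  fun i j => omg n ^ (∑ k : Fin d, ((i k : ℕ) : ZMod n) * ((j (k + 1) : ℕ) : ZMod n)).val

lemma omg_pow_n (n : ℕ) (hn : n ≠ 0) : omg n ^ n = 1 := by
  rw [omg, ← Complex.exp_nat_mul, mul_div_cancel₀]
  · exact Complex.exp_two_pi_mul_I
  · exact_mod_cast hn

lemma omg_pow_mod (n : ℕ) (hn : n ≠ 0) (a : ℕ) : omg n ^ (a % n) = omg n ^ a := by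
  conv_rhs => rw [← Nat.div_add_mod a n]
  rw [pow_add, pow_mul, omg_pow_n n hn, one_pow, one_mul]

lemma omg_pow_val_add (n : ℕ) [NeZero n] (x y : ZMod n) :
    omg n ^ (x + y).val = omg n ^ x.val * omg n ^ y.val := by
  rw [ZMod.val_add, omg_pow_mod n (NeZero.ne n), pow_add]

lemma fin_succ_parity {d : ℕ} [NeZero d] (hde : Even d) (k : Fin d) :
    ((k + 1 : Fin d) : ℕ) % 2 = ((k : ℕ) + 1) % 2 := by
  have hd2 : 2 ≤ d := by
    rcases hde with ⟨c, hc⟩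
    have := NeZero.ne d
    omega
  have h1 : ((1 : Fin d) : ℕ) = 1 := by
    simp [Fin.val_one', Nat.mod_eq_of_lt hd2]
  have hv : ((k + 1 : Fin d) : ℕ) = ((k : ℕ) + 1) % d := by
    rw [Fin.val_add, h1]
  rw [hv]
  rcases Nat.lt_or_ge ((k : ℕ) + 1) d with h | h
  · rw [Nat.mod_eq_of_lt h]
  · have hk : (k : ℕ) < d := k.isLt
    have he : (k : ℕ) + 1 = d := by omega
    rw [he, Nat.mod_self]
    rcases hde with ⟨c, hc⟩
    omega

/-- For `n` prime and `d ≥ 1` even, the partial transpose of `W_{T_2}` with respect to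
`κ = {1, 3, 5, …, d−1}` (1-indexed; i.e. the even 0-indexed positions) has rank `1`, and
consequently `PT-rank(W_{T_2}) = 1`. -/
theorem stmt19 (n d : ℕ) [NeZero d] (hp : n.Prime) (hd : 1 ≤ d) (hde : Even d) :
    (ptrans (Finset.univ.filter fun k : Fin d => (k : ℕ) % 2 = 0) (Wcyc n d)).rank = 1 ∧
    PTrank (Wcyc n d) = 1 := by
  haveI : NeZero n := ⟨hp.ne_zero⟩
  set κ : Finset (Fin d) := Finset.univ.filter fun k : Fin d => (k : ℕ) % 2 = 0 with hκ
  set u : (Fin d → Fin n) → ℂ := fun i =>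
    omg n ^ (∑ k ∈ Finset.univ.filter (fun k : Fin d => ¬ (k : ℕ) % 2 = 0),
      ((i k : ℕ) : ZMod n) * ((i (k + 1) : ℕ) : ZMod n)).val with hu
  set v : (Fin d → Fin n) → ℂ := fun j =>
    omg n ^ (∑ k ∈ Finset.univ.filter (fun k : Fin d => (k : ℕ) % 2 = 0),
      ((j k : ℕ) : ZMod n) * ((j (k + 1) : ℕ) : ZMod n)).val with hv
  set A : Matrix (Fin d → Fin n) (Fin 1) ℂ := fun i _ => u i with hA
  set B : Matrix (Fin 1) (Fin d → Fin n) ℂ := fun _ j => v j with hB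
  have hfact : ptrans κ (Wcyc n d) = A * B := by
    ext i j
    rw [Matrix.mul_apply, Fin.sum_univ_one]
    show Wcyc n d _ _ = u i * v j
    rw [Wcyc]
    have hsplit := Finset.sum_filter_add_sum_filter_not Finset.univ
      (fun k : Fin d => (k : ℕ) % 2 = 0)
      (fun k : Fin d =>
        (((if k ∈ κ then j k else i k : Fin n) : ℕ) : ZMod n) *
        (((if k + 1 ∈ κ then i (k + 1) else j (k + 1) : Fin n) : ℕ) : ZMod n))
    rw [← hsplit, omg_pow_val_add]
    have hmem : ∀ k : Fin d, k ∈ κ ↔ (k : ℕ) % 2 = 0 := by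
      intro k; simp [hκ]
    have hv' : (∑ k ∈ Finset.univ.filter (fun k : Fin d => (k : ℕ) % 2 = 0),
        (((if k ∈ κ then j k else i k : Fin n) : ℕ) : ZMod n) *
        (((if k + 1 ∈ κ then i (k + 1) else j (k + 1) : Fin n) : ℕ) : ZMod n)) =
        ∑ k ∈ Finset.univ.filter (fun k : Fin d => (k : ℕ) % 2 = 0),
        ((j k : ℕ) : ZMod n) * ((j (k + 1) : ℕ) : ZMod n) := by
      apply Finset.sum_congr rfl
      intro k hk
      rw [Finset.mem_filter] at hk
      have hke : (k : ℕ) % 2 = 0 := hk.2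
      have h1 : k ∈ κ := (hmem k).mpr hke
      have h2 : k + 1 ∉ κ := by
        rw [hmem, fin_succ_parity hde]
        omega
      rw [if_pos h1, if_neg h2]
    have hu' : (∑ k ∈ Finset.univ.filter (fun k : Fin d => ¬ (k : ℕ) % 2 = 0),
        (((if k ∈ κ then j k else i k : Fin n) : ℕ) : ZMod n) *
        (((if k + 1 ∈ κ then i (k + 1) else j (k + 1) : Fin n) : ℕ) : ZMod n)) =
        ∑ k ∈ Finset.univ.filter (fun k : Fin d => ¬ (k : ℕ) % 2 = 0),
        ((i k : ℕ) : ZMod n) * ((i (k + 1) : ℕ) : ZMod n) := by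
      apply Finset.sum_congr rfl
      intro k hk
      rw [Finset.mem_filter] at hk
      have hke : ¬ (k : ℕ) % 2 = 0 := hk.2
      have h1 : k ∉ κ := fun h => hke ((hmem k).mp h)
      have h2 : k + 1 ∈ κ := by
        rw [hmem, fin_succ_parity hde]
        omega
      rw [if_neg h1, if_pos h2]
    rw [hv', hu', hu, hv]
    ring
  have hrank : (ptrans κ (Wcyc n d)).rank = 1 := by
    have hle : (ptrans κ (Wcyc n d)).rank ≤ 1 := by
      rw [hfact]
      refine (Matrix.rank_mul_le_left A B).trans ?_
      simpa using Matrix.rank_le_card_width A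
    have hne : ptrans κ (Wcyc n d) 0 0 = 1 := by
      simp [ptrans, Wcyc]
    have hpos : 0 < (ptrans κ (Wcyc n d)).rank := by
      rw [Matrix.rank, Module.finrank_pos_iff_exists_ne_zero]
      refine ⟨⟨(ptrans κ (Wcyc n d)).mulVec (Pi.single 0 1),
        LinearMap.mem_range_self _ _⟩, ?_⟩
      suffices (ptrans κ (Wcyc n d)) *ᵥ Pi.single 0 1 ≠ 0 from fun h0 => this (congrArg Subtype.val h0)
      intro h
      have h2 := congrFun h 0
      rw [Matrix.mulVec_single] at h2
      simp only [MulOpposite.op_one, one_smul, Matrix.col_apply, mul_one, Pi.zero_apply] at h2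
      rw [hne] at h2
      exact one_ne_zero h2
    omega
  refine ⟨hrank, ?_⟩
  have h1mem : 1 ∈ { r | ∃ P : Fin r → Matrix (Fin d → Fin n) (Fin d → Fin n) ℂ,
      (∀ i, IsPTBasic (P i)) ∧ Wcyc n d = ∑ i, P i } := by
    exact ⟨fun _ => Wcyc n d, fun _ => ⟨κ, hrank⟩, by simp⟩
  have h0notmem : 0 ∉ { r | ∃ P : Fin r → Matrix (Fin d → Fin n) (Fin d → Fin n) ℂ,
      (∀ i, IsPTBasic (P i)) ∧ Wcyc n d = ∑ i, P i } := by
    rintro ⟨P, -, hP⟩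
    have : Wcyc n d = 0 := by
      rw [hP, Finset.univ_eq_empty, Finset.sum_empty]
    have h1 : Wcyc n d 0 0 = 1 := by
      rw [Wcyc]
      have hz : (∑ k : Fin d, (((0 : Fin n) : ℕ) : ZMod n) * (((0 : Fin n) : ℕ) : ZMod n)) =
          (0 : ZMod n) := by simp
      simp
    rw [this] at h1
    simp at h1
  rw [PTrank]
  apply le_antisymm
  · exact Nat.sInf_le h1mem
  · rcases Nat.eq_zero_or_pos (sInf _) with h | h
    · exact absurd (h ▸ Nat.sInf_mem ⟨1, h1mem⟩) h0notmem
    · exact h
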